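/- Let (M, d) be a metric space, C a finite nonempty set of clients in M, F a finite nonempty set of facilities in M, and f : F -> R_{>=0} opening costs. For a nonempty subset D of F define cost(D) = sum over i in D of f(i) + sum over j in C of min over i in D of d(j, i). Let D* be a nonempty subset of F minimizing cost over all nonempty subsets of F. Then for every facility p in F and every nonempty subset S of C, setting avgcost(p) = (f(p) + sum over j in S of d(j, p)) / |S|, there exists g in D* with d(p, g) <= 2 * avgcost(p). -/
import Mathlib


open scoped BigOperators

/-- For an optimal facility location solution `D*`, every facility `p` and every
nonempty client subset `S` admit `g ∈ D*` with `d(p,g) ≤ 2 · avgcost(p)`, where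
`avgcost(p) = (f(p) + Σ_{j ∈ S} d(j,p)) / |S|`. -/
theorem exists_opt_facility_close_to_avgcost
    {M : Type*} [MetricSpace M]
    (C F : Finset M) (hC : C.Nonempty) (hF : F.Nonempty)
    (f : M → ℝ) (hf : ∀ i ∈ F, 0 ≤ f i)
    (Dstar : Finset M) (hDstar : Dstar.Nonempty) (hDstarF : Dstar ⊆ F)
    (hopt : ∀ D : Finset M, D ⊆ F → ∀ hD : D.Nonempty,
      (∑ i ∈ Dstar, f i) + ∑ j ∈ C, Dstar.inf' hDstar (fun i => dist j i)
        ≤ (∑ i ∈ D, f i) + ∑ j ∈ C, D.inf' hD (fun i => dist j i))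
    (p : M) (hp : p ∈ F) (S : Finset M) (hS : S.Nonempty) (hSC : S ⊆ C) :
    ∃ g ∈ Dstar,
      dist p g ≤ 2 * ((f p + ∑ j ∈ S, dist j p) / S.card) := by
  classical
  have hcard : (0 : ℝ) < S.card := by exact_mod_cast Finset.card_pos.mpr hS
  have hTnn : 0 ≤ f p + ∑ j ∈ S, dist j p := by
    have : (0:ℝ) ≤ ∑ j ∈ S, dist j p := Finset.sum_nonneg fun j _ => dist_nonneg
    linarith [hf p hp]
  by_cases hpD : p ∈ Dstar
  · refine ⟨p, hpD, ?_⟩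
    rw [dist_self]
    positivity
  -- set a j = nearest distance in Dstar
  set a : M → ℝ := fun j => Dstar.inf' hDstar (fun i => dist j i) with ha
  have key : ∑ j ∈ S, a j ≤ f p + ∑ j ∈ S, dist j p := by
    have hD' : (insert p Dstar).Nonempty := Finset.insert_nonempty _ _
    have hsub : insert p Dstar ⊆ F := Finset.insert_subset hp hDstarF
    have h := hopt (insert p Dstar) hsub hD'
    have hsum : ∑ i ∈ insert p Dstar, f i = f p + ∑ i ∈ Dstar, f i :=
      Finset.sum_insert hpD
    have hinf : ∀ j, (insert p Dstar).inf' hD' (fun i => dist j i)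
        = min (dist j p) (a j) := fun j => Finset.inf'_insert _ _
    rw [hsum] at h
    simp only [hinf] at h
    have hC1 : ∑ j ∈ C, a j
        ≤ f p + ∑ j ∈ C, min (dist j p) (a j) := by linarith
    have hsplit : ∀ (g : M → ℝ), ∑ j ∈ C, g j = ∑ j ∈ S, g j + ∑ j ∈ C \ S, g j := by
      intro g
      rw [← Finset.sum_union (Finset.disjoint_sdiff), Finset.union_sdiff_of_subset hSC]
    rw [hsplit a, hsplit (fun j => min (dist j p) (a j))] at hC1
    have h1 : ∑ j ∈ C \ S, min (dist j p) (a j) ≤ ∑ j ∈ C \ S, a j :=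
      Finset.sum_le_sum fun j _ => min_le_right _ _
    have h2 : ∑ j ∈ S, min (dist j p) (a j) ≤ ∑ j ∈ S, dist j p :=
      Finset.sum_le_sum fun j _ => min_le_left _ _
    linarith
  -- average argument
  have key2 : ∑ j ∈ S, (a j + dist j p)
      ≤ ∑ j ∈ S, (2 * ((f p + ∑ j ∈ S, dist j p) / S.card)) := by
    rw [Finset.sum_add_distrib, Finset.sum_const, nsmul_eq_mul]
    have : (S.card : ℝ) * (2 * ((f p + ∑ j ∈ S, dist j p) / S.card))
        = 2 * (f p + ∑ j ∈ S, dist j p) := by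
      field_simp
    rw [this]
    linarith [hf p hp]
  obtain ⟨j, hjS, hj⟩ := Finset.exists_le_of_sum_le hS key2
  obtain ⟨g, hgD, hg⟩ := Finset.exists_mem_eq_inf' hDstar (fun i => dist j i)
  refine ⟨g, hgD, ?_⟩
  have htri : dist p g ≤ dist p j + dist j g := dist_triangle _ _ _
  have : a j = dist j g := hg
  rw [dist_comm p j] at htri
  linarith
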